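/- For κ ∈ ℂ and f twice continuously differentiable, the square of the one-variable Dunkl-type operator is given by T_κ² f(x) = f''(x) + (2κ/x) f'(x) + κ(κ-1)(f(x)-f(0))/x² - κ(κ+1) f'(0)/x for x ≠ 0. -/

import Mathlib

/-- The one-variable Dunkl-type operator with projection term,
extended by continuity at `x = 0` by the value `(1 + κ) f'(0)`. -/
noncomputable def Tkappa (κ : ℂ) (f : ℝ → ℂ) (x : ℝ) : ℂ :=
  if x = 0 then (1 + κ) * deriv f 0 else deriv f x + κ * (f x - f 0) / x

theorem Tkappa_sq (κ : ℂ) (f : ℝ → ℂ) (hf : ContDiff ℝ 2 f) (x : ℝ) (hx : x ≠ 0) :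
    Tkappa κ (Tkappa κ f) x =
      deriv (deriv f) x + (2 * κ / (x : ℂ)) * deriv f x
        + κ * (κ - 1) * (f x - f 0) / (x : ℂ) ^ 2
        - κ * (κ + 1) * deriv f 0 / (x : ℂ) := by
  have hfd : Differentiable ℝ f := hf.differentiable (by norm_num)
  have hf' : ContDiff ℝ 1 (deriv f) := by
    have := (contDiff_succ_iff_deriv (n := 1)).1 (by exact_mod_cast hf)
    exact this.2.2
  have hfd' : Differentiable ℝ (deriv f) := hf'.differentiable (by norm_num)
  -- derivative of the coercion ℝ → ℂ
  have hcoe : ∀ y : ℝ, HasDerivAt (fun t : ℝ => (t : ℂ)) 1 y := by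
    intro y
    exact (hasDerivAt_id y).ofReal_comp
  -- derivative of g := Tkappa κ f at x
  have hnum : HasDerivAt (fun y : ℝ => κ * (f y - f 0)) (κ * deriv f x) x :=
    ((hfd x).hasDerivAt.sub_const (f 0)).const_mul κ
  have hdiv : HasDerivAt (fun y : ℝ => κ * (f y - f 0) / (y : ℂ))
      ((κ * deriv f x * x - κ * (f x - f 0) * 1) / (x : ℂ) ^ 2) x :=
    hnum.div (hcoe x) (by exact_mod_cast hx)
  have hg : HasDerivAt (fun y : ℝ => deriv f y + κ * (f y - f 0) / (y : ℂ))
      (deriv (deriv f) x + (κ * deriv f x * x - κ * (f x - f 0) * 1) / (x : ℂ) ^ 2) x :=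
    (hfd' x).hasDerivAt.add hdiv
  have heq : Tkappa κ f =ᶠ[nhds x] fun y : ℝ => deriv f y + κ * (f y - f 0) / (y : ℂ) := by
    filter_upwards [isOpen_ne.mem_nhds hx] with y hy
    simp [Tkappa, hy]
  have hderiv : deriv (Tkappa κ f) x
      = deriv (deriv f) x + (κ * deriv f x * x - κ * (f x - f 0) * 1) / (x : ℂ) ^ 2 := by
    rw [Filter.EventuallyEq.deriv_eq heq]
    exact hg.deriv
  have hxC : (x : ℂ) ≠ 0 := by exact_mod_cast hx
  rw [Tkappa, if_neg hx, hderiv, Tkappa, if_neg hx, Tkappa, if_pos rfl]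
  field_simp
  ring
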